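/- Let ≻ and ≻₀ be 0-compatible preference relations such that one of them is an interval order (IO) and the other is a strict partial order (SPO). Then for each θ ∈ {∪, ▷, ⊗}, the transitive closure TC(≻₀ θ ≻) is a strict partial order. Moreover, if the one that is an IO is in fact a weak order (WO), then TC(≻₀ θ ≻) = ≻₀ θ ≻. -/

import Mathlib

/-- Union composition of preference relations: `x (r0 ∪ r) y` iff `x r0 y ∨ x r y`. -/
def PrefUnion {α : Type*} (r0 r : α → α → Prop) : α → α → Prop :=
  fun x y => r0 x y ∨ r x y

/-- Prioritized composition: `x (r0 ▷ r) y` iff `x r0 y ∨ (¬ y r0 x ∧ x r y)`. -/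
def PrefPrior {α : Type*} (r0 r : α → α → Prop) : α → α → Prop :=
  fun x y => r0 x y ∨ (¬ r0 y x ∧ r x y)

/-- Pareto composition: `x (r0 ⊗ r) y` iff `(x r0 y ∧ ¬ y r x) ∨ (x r y ∧ ¬ y r0 x)`. -/
def PrefPareto {α : Type*} (r0 r : α → α → Prop) : α → α → Prop :=
  fun x y => (r0 x y ∧ ¬ r y x) ∨ (r x y ∧ ¬ r0 y x)

/-- `r` and `r0` are 0-compatible: no pair `(t1,t2)` with `t1 r0 t2` and `t2 r t1`. -/
def Compat0 {α : Type*} (r r0 : α → α → Prop) : Prop :=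
  ¬ ∃ t1 t2, r0 t1 t2 ∧ r t2 t1

/-- Strict partial order: irreflexive and transitive. -/
def IsSPO {α : Type*} (r : α → α → Prop) : Prop :=
  (∀ x, ¬ r x x) ∧ (∀ x y z, r x y → r y z → r x z)

/-- Weak order: a negatively transitive SPO. -/
def IsWO {α : Type*} (r : α → α → Prop) : Prop :=
  IsSPO r ∧ (∀ x y z, ¬ r x y → ¬ r y z → ¬ r x z)

/-- Interval order: an SPO such that `x r y ∧ z r w → x r w ∨ z r y`. -/
def IsIO {α : Type*} (r : α → α → Prop) : Prop :=
  IsSPO r ∧ (∀ x y z w, r x y → r z w → r x w ∨ r z y)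

/-- Transitive closure of a preference relation. -/
def PrefTC {α : Type*} (r : α → α → Prop) : α → α → Prop :=
  Relation.TransGen r

/-- The winnow operator: the most preferred tuples of `s` w.r.t. `r`. -/
def Winnow {α : Type*} (r : α → α → Prop) (s : Set α) : Set α :=
  {t ∈ s | ¬ ∃ t' ∈ s, r t' t}

/-- Restriction of a preference relation to an instance `s`. -/
def Restrict {α : Type*} (r : α → α → Prop) (s : Set α) : α → α → Prop :=
  fun x y => r x y ∧ x ∈ s ∧ y ∈ s


private lemma key_chain {α : Type*} (p q : α → α → Prop)
    (hpt : ∀ x y z, p x y → p y z → p x z)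
    (hio : ∀ x y z w, p x y → p z w → p x w ∨ p z y)
    (hqt : ∀ x y z, q x y → q y z → q x z)
    (hcpq : ∀ a b, p a b → q b a → False) :
    ∀ x y, Relation.TransGen (fun a b => p a b ∨ q a b) x y →
      p x y ∨ q x y ∨ (∃ b, p x b ∧ q b y) ∨ (∃ b, q x b ∧ p b y) ∨
      (∃ b c, q x b ∧ p b c ∧ q c y) := by
  intro x y h
  induction h with
  | single h =>
    rcases h with h | h
    · exact Or.inl h
    · exact Or.inr (Or.inl h)
  | tail _ step ih =>
    rename_i b z _
    rcases step with hbz | hbz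
    · rcases ih with h1 | h1 | ⟨m, h1, h2⟩ | ⟨m, h1, h2⟩ | ⟨m, n, h1, h2, h3⟩
      · exact Or.inl (hpt _ _ _ h1 hbz)
      · exact Or.inr (Or.inr (Or.inr (Or.inl ⟨b, h1, hbz⟩)))
      · rcases hio x m b z h1 hbz with h | h
        · exact Or.inl h
        · exact absurd h2 (fun hq => hcpq _ _ h hq)
      · exact Or.inr (Or.inr (Or.inr (Or.inl ⟨m, h1, hpt _ _ _ h2 hbz⟩)))
      · rcases hio m n b z h2 hbz with h | h
        · exact Or.inr (Or.inr (Or.inr (Or.inl ⟨m, h1, h⟩)))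
        · exact absurd h3 (fun hq => hcpq _ _ h hq)
    · rcases ih with h1 | h1 | ⟨m, h1, h2⟩ | ⟨m, h1, h2⟩ | ⟨m, n, h1, h2, h3⟩
      · exact Or.inr (Or.inr (Or.inl ⟨b, h1, hbz⟩))
      · exact Or.inr (Or.inl (hqt _ _ _ h1 hbz))
      · exact Or.inr (Or.inr (Or.inl ⟨m, h1, hqt _ _ _ h2 hbz⟩))
      · exact Or.inr (Or.inr (Or.inr (Or.inr ⟨m, b, h1, h2, hbz⟩)))
      · exact Or.inr (Or.inr (Or.inr (Or.inr ⟨m, n, h1, h2, hqt _ _ _ h3 hbz⟩)))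

private lemma acyc {α : Type*} (p q : α → α → Prop)
    (hpi : ∀ x, ¬ p x x)
    (hpt : ∀ x y z, p x y → p y z → p x z)
    (hio : ∀ x y z w, p x y → p z w → p x w ∨ p z y)
    (hqt : ∀ x y z, q x y → q y z → q x z) (hqi : ∀ x, ¬ q x x)
    (hcpq : ∀ a b, p a b → q b a → False) :
    ∀ x, ¬ Relation.TransGen (fun a b => p a b ∨ q a b) x x := by
  intro x hx
  rcases key_chain p q hpt hio hqt hcpq x x hx with
    h | h | ⟨m, h1, h2⟩ | ⟨m, h1, h2⟩ | ⟨m, n, h1, h2, h3⟩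
  · exact hpi x h
  · exact hqi x h
  · exact hcpq _ _ h1 h2
  · exact hcpq _ _ h2 h1
  · exact hcpq _ _ h2 (hqt _ _ _ h3 h1)

private lemma wotrans {α : Type*} (p q : α → α → Prop)
    (hpt : ∀ x y z, p x y → p y z → p x z)
    (hnt : ∀ x y z, ¬ p x y → ¬ p y z → ¬ p x z)
    (hqt : ∀ x y z, q x y → q y z → q x z)
    (hcpq : ∀ a b, p a b → q b a → False) :
    ∀ x y z, (p x y ∨ q x y) → (p y z ∨ q y z) → (p x z ∨ q x z) := by
  intro x y z hxy hyz
  rcases hxy with hxy | hxy <;> rcases hyz with hyz | hyz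
  · exact Or.inl (hpt _ _ _ hxy hyz)
  · by_cases h1 : p x z
    · exact Or.inl h1
    · have h2 : p z y := by
        by_contra h2
        exact hnt x z y h1 h2 hxy
      exact absurd hyz (fun hq => hcpq _ _ h2 hq)
  · by_cases h1 : p x z
    · exact Or.inl h1
    · have h2 : p y x := by
        by_contra h2
        exact hnt y x z h2 h1 hyz
      exact absurd hxy (fun hq => hcpq _ _ h2 hq)
  · exact Or.inr (hqt _ _ _ hxy hyz)
/-- For 0-compatible relations, one an IO and the other an SPO, the transitive closure
of each composition is an SPO; if the IO is a WO, the transitive closure is superfluous. -/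
theorem stmt1 {α : Type*} (r r0 : α → α → Prop)
    (hc : Compat0 r r0)
    (h : (IsIO r0 ∧ IsSPO r) ∨ (IsIO r ∧ IsSPO r0)) :
    (IsSPO (PrefTC (PrefUnion r0 r)) ∧ IsSPO (PrefTC (PrefPrior r0 r)) ∧
      IsSPO (PrefTC (PrefPareto r0 r))) ∧
    (((IsWO r0 ∧ IsSPO r) ∨ (IsWO r ∧ IsSPO r0)) →
      (PrefTC (PrefUnion r0 r) = PrefUnion r0 r ∧
       PrefTC (PrefPrior r0 r) = PrefPrior r0 r ∧
       PrefTC (PrefPareto r0 r) = PrefPareto r0 r)) := by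
    -- basic compatibility fact
  have hc' : ∀ a b, r0 a b → r b a → False := fun a b h0 hr => hc ⟨a, b, h0, hr⟩
  -- all three compositions coincide with the union
  have e1 : PrefPrior r0 r = PrefUnion r0 r := by
    funext x y
    apply propext
    constructor
    · rintro (h | ⟨_, h⟩)
      · exact Or.inl h
      · exact Or.inr h
    · rintro (h | h)
      · exact Or.inl h
      · exact Or.inr ⟨fun h0 => hc' y x h0 h, h⟩
  have e2 : PrefPareto r0 r = PrefUnion r0 r := by
    funext x y
    apply propext
    constructor
    · rintro (⟨h, _⟩ | ⟨h, _⟩)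
      · exact Or.inl h
      · exact Or.inr h
    · rintro (h | h)
      · exact Or.inl ⟨h, fun hr => hc' x y h hr⟩
      · exact Or.inr ⟨h, fun h0 => hc' y x h0 h⟩
  -- acyclicity of the union
  have hirr : ∀ x, ¬ PrefTC (PrefUnion r0 r) x x := by
    rcases h with ⟨⟨⟨hi0, ht0⟩, hio0⟩, ⟨hi, ht⟩⟩ | ⟨⟨⟨hi, ht⟩, hio⟩, ⟨hi0, ht0⟩⟩
    · exact acyc r0 r hi0 ht0 hio0 ht hi hc'
    · intro x hx
      have hx' : Relation.TransGen (fun a b => r a b ∨ r0 a b) x x :=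
        Relation.TransGen.mono (r := PrefUnion r0 r) (p := fun a b => r a b ∨ r0 a b)
          (by intro a b hab; exact Or.symm hab) x x hx
      exact acyc r r0 hi ht hio ht0 hi0 (fun a b ha h0 => hc' b a h0 ha) x hx'
  have hspoU : IsSPO (PrefTC (PrefUnion r0 r)) :=
    ⟨hirr, fun _ _ _ h1 h2 => Relation.TransGen.trans h1 h2⟩
  refine ⟨⟨hspoU, by rw [e1]; exact hspoU, by rw [e2]; exact hspoU⟩, ?_⟩
  intro hw
  have htr : ∀ x y z, PrefUnion r0 r x y → PrefUnion r0 r y z → PrefUnion r0 r x z := by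
    rcases hw with ⟨⟨⟨_, ht0⟩, hnt0⟩, ⟨_, ht⟩⟩ | ⟨⟨⟨_, ht⟩, hnt⟩, ⟨_, ht0⟩⟩
    · exact wotrans r0 r ht0 hnt0 ht hc'
    · intro x y z h1 h2
      exact (wotrans r r0 ht hnt ht0 (fun a b ha h0 => hc' b a h0 ha) x y z
        h1.symm h2.symm).symm
  have heq : PrefTC (PrefUnion r0 r) = PrefUnion r0 r :=
    @Relation.transGen_eq_self _ _ ⟨fun _ _ _ h1 h2 => htr _ _ _ h1 h2⟩
  exact ⟨heq, by rw [e1]; exact heq, by rw [e2]; exact heq⟩
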